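/- Let $n \ge 1$ and let $C$ be the Cartan matrix of type $A_n$. For any $Z \in \mathbb{C}^n$, $\sum_{i,j=1}^n (C^{-1})_{ij} Z_i \overline{Z_j} \ge \frac{1}{n+1} \sum_{i=1}^n |Z_i|^2$, where the left-hand side is real. -/

import Mathlib

open Matrix Finset

/-- The Cartan matrix of type `Aₙ`, over the complex numbers. -/
def cartanA (n : ℕ) : Matrix (Fin n) (Fin n) ℂ :=
  Matrix.of fun i j =>
    if i = j then 2 else if i.val + 1 = j.val ∨ j.val + 1 = i.val then -1 else 0

/-- Candidate inverse entry: `min i j - i*j/(n+1)` (1-based indices). -/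
noncomputable def gA (n i j : ℕ) : ℂ := (min i j : ℕ) - (i * j : ℂ) / (n + 1)

lemma gA_zero (n j : ℕ) : gA n 0 j = 0 := by simp [gA]

lemma gA_top (n j : ℕ) (h : j ≤ n + 1) : gA n (n + 1) j = 0 := by
  have hne : ((n : ℂ) + 1) ≠ 0 := Nat.cast_add_one_ne_zero n
  simp only [gA, min_eq_right h]
  field_simp
  push_cast
  ring

lemma gkey (n i j : ℕ) :
    2 * gA n (i + 1) j - gA n i j - gA n (i + 2) j = if i + 1 = j then 1 else 0 := by
  have hne : ((n : ℂ) + 1) ≠ 0 := Nat.cast_add_one_ne_zero n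
  simp only [gA]
  rcases lt_trichotomy j (i + 1) with h | h | h
  · rw [min_eq_right (by omega : j ≤ i), min_eq_right (by omega : j ≤ i + 1),
      min_eq_right (by omega : j ≤ i + 2), if_neg (by omega)]
    field_simp
    push_cast
    try ring
  · rw [min_eq_left (by omega : i ≤ j), min_eq_right (by omega : j ≤ i + 1),
      min_eq_right (by omega : j ≤ i + 2), if_pos (by omega)]
    subst h
    field_simp
    push_cast
    try ring
  · rw [min_eq_left (by omega : i ≤ j), min_eq_left (by omega : i + 1 ≤ j),
      min_eq_left (by omega : i + 2 ≤ j), if_neg (by omega)]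
    field_simp
    push_cast
    try ring

lemma sum_delta' (n m : ℕ) (f : ℕ → ℂ) (h0 : f 0 = 0) (htop : n < m → f m = 0) :
    ∑ k : Fin n, (if (k : ℕ) + 1 = m then f ((k : ℕ) + 1) else 0) = f m := by
  by_cases hmn : 1 ≤ m ∧ m ≤ n
  · obtain ⟨t, rfl⟩ : ∃ t, m = t + 1 := ⟨m - 1, by omega⟩
    rw [Finset.sum_eq_single (⟨t, by omega⟩ : Fin n)]
    · simp
    · intro b _ hb
      rw [if_neg]
      intro hc
      exact hb (Fin.ext (by simpa using hc))
    · simp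
  · have hf : f m = 0 := by
      rcases Nat.eq_zero_or_pos m with rfl | hm
      · exact h0
      · exact htop (by omega)
    rw [hf]
    apply Finset.sum_eq_zero
    intro k _
    rw [if_neg]
    have := k.isLt
    omega

/-- The inverse of the Cartan matrix of type `Aₙ`. -/
noncomputable def invA (n : ℕ) : Matrix (Fin n) (Fin n) ℂ :=
  Matrix.of fun i j => gA n ((i : ℕ) + 1) ((j : ℕ) + 1)

lemma cartan_mul_invA (n : ℕ) : cartanA n * invA n = 1 := by
  ext i j
  rw [Matrix.mul_apply]
  have hsplit : ∀ k : Fin n, cartanA n i k * invA n k j =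
      (if (k : ℕ) + 1 = (i : ℕ) + 1 then 2 * gA n ((k : ℕ) + 1) ((j : ℕ) + 1) else 0)
      - (if (k : ℕ) + 1 = (i : ℕ) then gA n ((k : ℕ) + 1) ((j : ℕ) + 1) else 0)
      - (if (k : ℕ) + 1 = (i : ℕ) + 2 then gA n ((k : ℕ) + 1) ((j : ℕ) + 1) else 0) := by
    intro k
    simp only [cartanA, invA, of_apply, Fin.ext_iff]
    split_ifs <;> first | omega | ring1
  rw [Finset.sum_congr rfl (fun k _ => hsplit k), Finset.sum_sub_distrib,
    Finset.sum_sub_distrib]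
  have e1 : (∑ k : Fin n, if (k : ℕ) + 1 = (i : ℕ) + 1 then
      2 * gA n ((k : ℕ) + 1) ((j : ℕ) + 1) else 0) = 2 * gA n ((i : ℕ) + 1) ((j : ℕ) + 1) :=
    sum_delta' n ((i : ℕ) + 1) (fun t => 2 * gA n t ((j : ℕ) + 1))
      (by simp [gA_zero]) (fun h => absurd i.isLt (by omega))
  have e2 : (∑ k : Fin n, if (k : ℕ) + 1 = (i : ℕ) then
      gA n ((k : ℕ) + 1) ((j : ℕ) + 1) else 0) = gA n (i : ℕ) ((j : ℕ) + 1) :=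
    sum_delta' n (i : ℕ) (fun t => gA n t ((j : ℕ) + 1))
      (gA_zero n _) (fun h => absurd i.isLt (by omega))
  have e3 : (∑ k : Fin n, if (k : ℕ) + 1 = (i : ℕ) + 2 then
      gA n ((k : ℕ) + 1) ((j : ℕ) + 1) else 0) = gA n ((i : ℕ) + 2) ((j : ℕ) + 1) :=
    sum_delta' n ((i : ℕ) + 2) (fun t => gA n t ((j : ℕ) + 1))
      (gA_zero n _) (by
        intro h
        show gA n ((i : ℕ) + 2) ((j : ℕ) + 1) = 0
        have hi := i.isLt
        have hj := j.isLt
        have : (i : ℕ) + 2 = n + 1 := by omega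
        rw [this]
        exact gA_top n _ (by omega))
  rw [e1, e2, e3, gkey, Matrix.one_apply]
  by_cases h : i = j
  · rw [if_pos h, if_pos (by rw [h])]
  · rw [if_neg h, if_neg (by simpa [Fin.ext_iff] using h)]

lemma invA_eq (n : ℕ) : (cartanA n)⁻¹ = invA n :=
  Matrix.inv_eq_right_inv (cartan_mul_invA n)

lemma sum4_comm {n : ℕ} (F : Fin n → Fin n → Fin n → Fin n → ℂ) :
    ∑ k : Fin n, ∑ l : Fin n, ∑ i : Fin n, ∑ j : Fin n, F k l i j
      = ∑ i : Fin n, ∑ j : Fin n, ∑ k : Fin n, ∑ l : Fin n, F k l i j := by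
  have key : ∑ p : Fin n × Fin n, ∑ q : Fin n × Fin n, F p.1 p.2 q.1 q.2
      = ∑ q : Fin n × Fin n, ∑ p : Fin n × Fin n, F p.1 p.2 q.1 q.2 := Finset.sum_comm
  simpa [Fintype.sum_prod_type] using key

lemma fin_val_min {n : ℕ} (i j : Fin n) : ((i ⊓ j : Fin n) : ℕ) = (i : ℕ) ⊓ (j : ℕ) := by
  rcases le_total i j with h | h
  · rw [inf_eq_left.mpr h, inf_eq_left.mpr (Fin.le_def.mp h)]
  · rw [inf_eq_right.mpr h, inf_eq_right.mpr (Fin.le_def.mp h)]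

lemma fin_val_max {n : ℕ} (i j : Fin n) : ((i ⊔ j : Fin n) : ℕ) = (i : ℕ) ⊔ (j : ℕ) := by
  rcases le_total i j with h | h
  · rw [sup_eq_right.mpr h, sup_eq_right.mpr (Fin.le_def.mp h)]
  · rw [sup_eq_left.mpr h, sup_eq_left.mpr (Fin.le_def.mp h)]

lemma count_k {n : ℕ} (i j : Fin n) :
    ∑ k : Fin n, (if k ≤ i ∧ k ≤ j then (1 : ℂ) else 0)
      = ((min (i : ℕ) (j : ℕ) + 1 : ℕ) : ℂ) := by
  rw [Finset.sum_boole]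
  have : Finset.filter (fun k : Fin n => k ≤ i ∧ k ≤ j) Finset.univ = Finset.Iic (min i j) := by
    ext k; simp [le_min_iff]
  rw [this, Fin.card_Iic, fin_val_min]

lemma count_l {n : ℕ} (i j : Fin n) :
    ∑ l : Fin n, (if i ≤ l ∧ j ≤ l then (1 : ℂ) else 0)
      = ((n - max (i : ℕ) (j : ℕ) : ℕ) : ℂ) := by
  rw [Finset.sum_boole]
  have : Finset.filter (fun l : Fin n => i ≤ l ∧ j ≤ l) Finset.univ = Finset.Ici (max i j) := by
    ext l; simp [max_le_iff]
  rw [this, Fin.card_Ici, fin_val_max]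

lemma coeff_eq {n : ℕ} (i j : Fin n) :
    ((n : ℂ) + 1) * gA n ((i : ℕ) + 1) ((j : ℕ) + 1)
      = ((min (i : ℕ) (j : ℕ) + 1 : ℕ) : ℂ) * ((n - max (i : ℕ) (j : ℕ) : ℕ) : ℂ) := by
  have hne : ((n : ℂ) + 1) ≠ 0 := Nat.cast_add_one_ne_zero n
  have hi := i.isLt
  have hj := j.isLt
  simp only [gA]
  rcases le_total (i : ℕ) (j : ℕ) with h | h
  · rw [min_eq_left (by omega : (i : ℕ) + 1 ≤ (j : ℕ) + 1), min_eq_left h,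
      max_eq_right h, Nat.cast_sub (by omega : (j : ℕ) ≤ n)]
    field_simp
    push_cast
    ring
  · rw [min_eq_right (by omega : (j : ℕ) + 1 ≤ (i : ℕ) + 1), min_eq_right h,
      max_eq_left h, Nat.cast_sub (by omega : (i : ℕ) ≤ n)]
    field_simp
    push_cast
    ring

lemma hIcc {n : ℕ} (f : Fin n → ℂ) (k l : Fin n) :
    (∑ m ∈ Finset.Icc k l, f m) = ∑ m : Fin n, if k ≤ m ∧ m ≤ l then f m else 0 := by
  rw [show Finset.Icc k l = Finset.filter (fun m => k ≤ m ∧ m ≤ l) Finset.univ from by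
    ext x; simp [Finset.mem_Icc], Finset.sum_filter]

lemma main_identity (n : ℕ) (Z : Fin n → ℂ) :
    ((n : ℂ) + 1) * ∑ i : Fin n, ∑ j : Fin n,
        invA n i j * Z i * (starRingEnd ℂ) (Z j)
      = ((∑ k : Fin n, ∑ l : Fin n,
          Complex.normSq (∑ m ∈ Finset.Icc k l, Z m) : ℝ) : ℂ) := by
  have step1 : ∀ k l : Fin n,
      ((Complex.normSq (∑ m ∈ Finset.Icc k l, Z m) : ℝ) : ℂ)
        = ∑ i : Fin n, ∑ j : Fin n,
            (if (k ≤ i ∧ i ≤ l) ∧ (k ≤ j ∧ j ≤ l) then Z i * (starRingEnd ℂ) (Z j) else 0) := by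
    intro k l
    rw [← Complex.mul_conj]
    rw [map_sum, hIcc Z k l, hIcc (fun m => (starRingEnd ℂ) (Z m)) k l, Finset.sum_mul_sum]
    apply Finset.sum_congr rfl
    intro i _
    apply Finset.sum_congr rfl
    intro j _
    split_ifs <;> simp_all
  calc ((n : ℂ) + 1) * ∑ i : Fin n, ∑ j : Fin n, invA n i j * Z i * (starRingEnd ℂ) (Z j)
      = ∑ i : Fin n, ∑ j : Fin n,
          (((n : ℂ) + 1) * invA n i j) * (Z i * (starRingEnd ℂ) (Z j)) := by
        rw [Finset.mul_sum]
        apply Finset.sum_congr rfl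
        intro i _
        rw [Finset.mul_sum]
        apply Finset.sum_congr rfl
        intro j _
        ring
    _ = ∑ i : Fin n, ∑ j : Fin n,
          (∑ k : Fin n, ∑ l : Fin n,
            if (k ≤ i ∧ i ≤ l) ∧ (k ≤ j ∧ j ≤ l) then Z i * (starRingEnd ℂ) (Z j) else 0) := by
        apply Finset.sum_congr rfl
        intro i _
        apply Finset.sum_congr rfl
        intro j _
        have hcoef : ((n : ℂ) + 1) * invA n i j
            = (∑ k : Fin n, (if k ≤ i ∧ k ≤ j then (1 : ℂ) else 0))
              * (∑ l : Fin n, (if i ≤ l ∧ j ≤ l then (1 : ℂ) else 0)) := by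
          rw [count_k, count_l]
          exact coeff_eq i j
        rw [hcoef, Finset.sum_mul_sum]
        rw [Finset.sum_mul]
        apply Finset.sum_congr rfl
        intro k _
        rw [Finset.sum_mul]
        apply Finset.sum_congr rfl
        intro l _
        split_ifs <;> first | (exfalso; tauto) | simp
    _ = ∑ k : Fin n, ∑ l : Fin n, ∑ i : Fin n, ∑ j : Fin n,
          (if (k ≤ i ∧ i ≤ l) ∧ (k ≤ j ∧ j ≤ l) then Z i * (starRingEnd ℂ) (Z j) else 0) :=
        (sum4_comm _).symm
    _ = ((∑ k : Fin n, ∑ l : Fin n,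
          Complex.normSq (∑ m ∈ Finset.Icc k l, Z m) : ℝ) : ℂ) := by
        push_cast
        apply Finset.sum_congr rfl
        intro k _
        apply Finset.sum_congr rfl
        intro l _
        exact (step1 k l).symm

set_option maxHeartbeats 1000000 in
theorem volume_typeA_ge (n : ℕ) (hn : 1 ≤ n) (Z : Fin n → ℂ) :
    (∑ i : Fin n, ∑ j : Fin n,
        (cartanA n)⁻¹ i j * Z i * (starRingEnd ℂ) (Z j)).im = 0
    ∧ (1 / ((n : ℝ) + 1)) * ∑ i : Fin n, ‖Z i‖ ^ 2
        ≤ (∑ i : Fin n, ∑ j : Fin n,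
            (cartanA n)⁻¹ i j * Z i * (starRingEnd ℂ) (Z j)).re := by
  rw [invA_eq]
  set Q := ∑ i : Fin n, ∑ j : Fin n, invA n i j * Z i * (starRingEnd ℂ) (Z j) with hQ
  set T : ℝ := ∑ k : Fin n, ∑ l : Fin n, Complex.normSq (∑ m ∈ Finset.Icc k l, Z m) with hT
  have hmain : ((n : ℂ) + 1) * Q = (T : ℂ) := main_identity n Z
  have hnre : ((n : ℂ) + 1).re = (n : ℝ) + 1 := by simp
  have hnim : ((n : ℂ) + 1).im = 0 := by simp
  have hre : ((n : ℝ) + 1) * Q.re = T := by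
    have h := congrArg Complex.re hmain
    rwa [Complex.mul_re, hnre, hnim, zero_mul, sub_zero, Complex.ofReal_re] at h
  have him : ((n : ℝ) + 1) * Q.im = 0 := by
    have h := congrArg Complex.im hmain
    rwa [Complex.mul_im, hnre, hnim, zero_mul, add_zero, Complex.ofReal_im] at h
  have hpos : (0 : ℝ) < (n : ℝ) + 1 := by positivity
  have hQim : Q.im = 0 := by
    rcases mul_eq_zero.mp him with h | h
    · exact absurd h (by positivity)
    · exact h
  have hdiag : ∑ i : Fin n, ‖Z i‖ ^ 2 ≤ T := by
    have h1 : ∀ i : Fin n, ‖Z i‖ ^ 2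
        = Complex.normSq (∑ m ∈ Finset.Icc i i, Z m) := by
      intro i
      rw [Finset.Icc_self, Finset.sum_singleton, Complex.sq_norm]
    rw [hT]
    calc ∑ i : Fin n, ‖Z i‖ ^ 2
        = ∑ k : Fin n, Complex.normSq (∑ m ∈ Finset.Icc k k, Z m) :=
          Finset.sum_congr rfl fun i _ => h1 i
      _ ≤ ∑ k : Fin n, ∑ l : Fin n, Complex.normSq (∑ m ∈ Finset.Icc k l, Z m) :=
          Finset.sum_le_sum fun k _ =>
            Finset.single_le_sum (f := fun l => Complex.normSq (∑ m ∈ Finset.Icc k l, Z m))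
              (fun l _ => Complex.normSq_nonneg _) (Finset.mem_univ k)
  have hQre : Q.re = T / ((n : ℝ) + 1) := by
    rw [eq_div_iff hpos.ne']
    linarith [hre]
  refine ⟨hQim, ?_⟩
  rw [hQre, one_div, inv_mul_eq_div]
  gcongr
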